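/- Let s ∈ (0,1) and let M be a Young function. There exists a constant C = C(n,s) > 0 (one may take C = 2^{s+1}·max{1, 2^{n+1}/ω_n}, where ω_n is the Lebesgue measure of the unit ball of ℝⁿ) such that for every measurable u : ℝⁿ → ℝ with ‖D^s u‖_{M,ν_n} < ∞ and every h ∈ ℝⁿ with 0 < |h| < 1/2, ‖u(·+h) − u‖_{M,dx} ≤ C |h|^s ‖D^s u‖_{M,ν_n}, where ‖·‖_{M,dx} is the Luxemburg norm on (ℝⁿ, Lebesgue measure) and ‖·‖_{M,ν_n} is the Luxemburg norm on (ℝ^{2n}, ν_n). -/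

import Mathlib

open MeasureTheory Filter Topology Set

noncomputable section

/-- ℝⁿ with the Euclidean norm. -/
abbrev Rn (n : ℕ) : Type := EuclideanSpace ℝ (Fin n)

/-- The measure dν_n = dx dy / |x-y|^n on ℝ^{2n}. -/
def nuMeasure (n : ℕ) : Measure (Rn n × Rn n) :=
  volume.withDensity fun p => ENNReal.ofReal (‖p.1 - p.2‖ ^ (-(n : ℝ)))

/-- Hölder quotient `D^s u (x,y) = (u x - u y)/|x-y|^s`. -/
def Ds (n : ℕ) (s : ℝ) (u : Rn n → ℝ) (p : Rn n × Rn n) : ℝ :=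
  (u p.1 - u p.2) / ‖p.1 - p.2‖ ^ s

/-- A Young function, encoded by its density `m` which is nondecreasing, right continuous,
vanishing exactly at `0`, tending to `∞` and extended to `ℝ` as an odd function. -/
structure YoungFunction where
  m : ℝ → ℝ
  nonneg : ∀ t, 0 ≤ t → 0 ≤ m t
  mono : MonotoneOn m (Set.Ici 0)
  rightCont : ∀ t, 0 ≤ t → ContinuousWithinAt m (Set.Ici t) t
  zero_iff : ∀ t, 0 ≤ t → (m t = 0 ↔ t = 0)
  tendsto_top : Filter.Tendsto m Filter.atTop Filter.atTop
  odd : ∀ t, m (-t) = -m t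

/-- `M(t) = ∫_0^{|t|} m(τ) dτ`. -/
def YoungFunction.M (Y : YoungFunction) (t : ℝ) : ℝ :=
  ∫ τ in (0:ℝ)..|t|, Y.m τ

/-- The complementary Young function `M̄(t) = sup {τ|t| - M(τ) : τ ≥ 0}`. -/
def YoungFunction.Mbar (Y : YoungFunction) (t : ℝ) : ℝ :=
  sSup {x : ℝ | ∃ τ, 0 ≤ τ ∧ x = τ * |t| - Y.M τ}

/-- The segment property for a bounded open set. -/
def SegmentProperty {n : ℕ} (Ω : Set (Rn n)) : Prop :=
  ∃ (ι : Type) (c : ι → Rn n) (t : ℝ) (ν : ι → Rn n) (tstar : ℝ),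
    0 < t ∧ 0 < tstar ∧ tstar < 1 ∧
    (∀ j, c j ∈ frontier Ω) ∧
    (∀ j, ‖ν j‖ = 1) ∧
    frontier Ω ⊆ ⋃ j, Metric.ball (c j) t ∧
    LocallyFinite (fun j => Metric.ball (c j) t) ∧
    ∀ j, ∀ x ∈ closure Ω ∩ Metric.ball (c j) t, ∀ τ : ℝ, 0 < τ → τ < tstar →
      x + τ • ν j ∈ Ω

namespace YoungFunction
variable (Y : YoungFunction)

lemma m_ii {a b : ℝ} (ha : 0 ≤ a) (hb : 0 ≤ b) : IntervalIntegrable Y.m volume a b := by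
  apply MonotoneOn.intervalIntegrable
  exact Y.mono.mono (fun x hx => le_trans (le_min ha hb) hx.1)

lemma M_eq {t : ℝ} (h : 0 ≤ t) : Y.M t = ∫ τ in (0:ℝ)..t, Y.m τ := by
  rw [M, abs_of_nonneg h]

lemma M_abs (t : ℝ) : Y.M |t| = Y.M t := by rw [M, M, abs_abs]

lemma M_nonneg (t : ℝ) : 0 ≤ Y.M t :=
  intervalIntegral.integral_nonneg (abs_nonneg t) (fun τ hτ => Y.nonneg τ hτ.1)

lemma M_zero : Y.M 0 = 0 := by simp [M]

lemma integral_ge {a b : ℝ} (ha : 0 ≤ a) (hab : a ≤ b) :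
    (b - a) * Y.m a ≤ ∫ τ in a..b, Y.m τ := by
  have : ∫ τ in a..b, Y.m a = (b - a) * Y.m a := by simp [mul_comm]
  rw [← this]
  refine intervalIntegral.integral_mono_on hab (intervalIntegrable_const)
    (Y.m_ii ha (ha.trans hab)) (fun x hx => Y.mono (by exact ha) (ha.trans hx.1) hx.1)

lemma integral_le {a b : ℝ} (ha : 0 ≤ a) (hab : a ≤ b) :
    (∫ τ in a..b, Y.m τ) ≤ (b - a) * Y.m b := by
  have : ∫ τ in a..b, Y.m b = (b - a) * Y.m b := by simp [mul_comm]
  rw [← this]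
  refine intervalIntegral.integral_mono_on hab (Y.m_ii ha (ha.trans hab))
    intervalIntegrable_const (fun x hx => Y.mono (ha.trans hx.1) (ha.trans hab) hx.2)

lemma M_split {a b : ℝ} (ha : 0 ≤ a) (hab : a ≤ b) :
    Y.M b = Y.M a + ∫ τ in a..b, Y.m τ := by
  rw [M_eq Y ha, M_eq Y (ha.trans hab),
    intervalIntegral.integral_add_adjacent_intervals (Y.m_ii le_rfl ha) (Y.m_ii ha (ha.trans hab))]

lemma M_mono {a b : ℝ} (ha : 0 ≤ a) (hab : a ≤ b) : Y.M a ≤ Y.M b := by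
  rw [M_split Y ha hab]
  have h2 : 0 ≤ ∫ τ in a..b, Y.m τ :=
    intervalIntegral.integral_nonneg hab (fun x hx => Y.nonneg x (ha.trans hx.1))
  linarith

lemma M_mono' {a b : ℝ} (h : |a| ≤ |b|) : Y.M a ≤ Y.M b := by
  rw [← M_abs Y a, ← M_abs Y b]; exact Y.M_mono (abs_nonneg a) h

lemma M_neg (t : ℝ) : Y.M (-t) = Y.M t := by rw [M, M, abs_neg]

lemma M_midpoint_nn {a b : ℝ} (ha : 0 ≤ a) (hab : a ≤ b) :
    Y.M ((a + b) / 2) ≤ (Y.M a + Y.M b) / 2 := by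
  set c := (a + b) / 2 with hc
  have hac : a ≤ c := by rw [hc]; linarith
  have hcb : c ≤ b := by rw [hc]; linarith
  have hc0 : 0 ≤ c := ha.trans hac
  have h1 := Y.M_split ha hac
  have h2 := Y.M_split hc0 hcb
  have h3 := Y.integral_le ha hac
  have h4 := Y.integral_ge hc0 hcb
  have hbc : b - c = c - a := by rw [hc]; ring
  rw [hbc] at h4
  linarith

lemma M_midpoint (a b : ℝ) : Y.M ((a + b) / 2) ≤ (Y.M a + Y.M b) / 2 := by
  have h1 : |(a + b) / 2| ≤ (|a| + |b|) / 2 := by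
    rw [abs_div, abs_two]; gcongr; exact abs_add_le a b
  have h2 : Y.M ((a + b) / 2) ≤ Y.M ((|a| + |b|) / 2) := by
    refine Y.M_mono' ?_
    rw [abs_of_nonneg (by positivity : (0:ℝ) ≤ (|a| + |b|) / 2)]; exact h1
  rcases le_total |a| |b| with hab | hab
  · have := Y.M_midpoint_nn (abs_nonneg a) hab
    rw [M_abs, M_abs] at this; linarith
  · have := Y.M_midpoint_nn (abs_nonneg b) hab
    rw [M_abs, M_abs, add_comm (|b|)] at this
    rw [add_comm (Y.M b)] at this; linarith

lemma M_div {A t : ℝ} (hA : 1 ≤ A) (ht : 0 ≤ t) : Y.M (t / A) ≤ Y.M t / A := by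
  have hA0 : 0 < A := lt_of_lt_of_le one_pos hA
  set c := t / A with hc
  have hc0 : 0 ≤ c := by positivity
  have hct : c ≤ t := by
    rw [hc, div_le_iff₀ hA0]; nlinarith
  have h1 := Y.M_split hc0 hct
  have hMc : Y.M c ≤ c * Y.m c := by
    have := Y.integral_le (le_refl (0:ℝ)) hc0
    rw [← M_eq Y hc0] at this; simpa using this
  have h4 := Y.integral_ge hc0 hct
  have htc : t - c = (A - 1) * c := by
    rw [hc]; field_simp
  have hmc : 0 ≤ Y.m c := Y.nonneg c hc0
  rw [le_div_iff₀ hA0]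
  nlinarith [Y.M_nonneg c]

lemma M_le_div {A t c : ℝ} (hA : 1 ≤ A) (h : |t| ≤ |c| / A) : Y.M t ≤ Y.M c / A := by
  have h1 : Y.M t ≤ Y.M (|c| / A) := by
    refine Y.M_mono' ?_
    rwa [abs_of_nonneg (by positivity : (0:ℝ) ≤ |c| / A)]
  have h2 : Y.M (|c| / A) ≤ Y.M |c| / A := Y.M_div hA (abs_nonneg c)
  rw [M_abs] at h2; linarith

lemma M_measurable : Measurable Y.M := by
  have hmono : Monotone (fun x : ℝ => if 0 ≤ x then Y.M x else 0) := by
    intro x y hxy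
    dsimp only
    split_ifs with hx hy hy
    · exact Y.M_mono hx hxy
    · exact absurd (hx.trans hxy) hy
    · exact Y.M_nonneg y
    · exact le_rfl
  have : Y.M = (fun x : ℝ => if 0 ≤ x then Y.M x else 0) ∘ (fun t : ℝ => |t|) := by
    funext t; simp [abs_nonneg, M_abs]
  rw [this]
  exact hmono.measurable.comp measurable_abs

/-- Key scaling estimate. -/
lemma key (s : ℝ) {A k k' : ℝ} (hA : 1 ≤ A) (hk : 0 < k) (hk' : 0 < k')
    (b d : ℝ) (hd : 0 ≤ d) (hbd : d = 0 → b = 0)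
    (hbound : 2 * A * k * d ^ s ≤ k') :
    Y.M (2 * b / k') ≤ Y.M ((b / d ^ s) / k) / A := by
  rcases eq_or_lt_of_le hd with h0 | h0
  · have hb : b = 0 := hbd h0.symm
    simp only [hb, mul_zero, zero_div, Y.M_zero]
    positivity
  · have hds : 0 < d ^ s := Real.rpow_pos_of_pos h0 s
    apply Y.M_le_div hA
    have e1 : |2 * b / k'| = 2 * |b| / k' := by
      rw [abs_div, abs_mul, abs_two, abs_of_pos hk']
    have e2 : |b / d ^ s / k| / A = |b| / (d ^ s * k * A) := by
      rw [abs_div, abs_div, abs_of_pos hds, abs_of_pos hk, div_div, div_div, mul_assoc]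
    rw [e1, e2, div_le_div_iff₀ hk' (by positivity)]
    nlinarith [mul_le_mul_of_nonneg_left hbound (abs_nonneg b), abs_nonneg b,
      mul_pos (mul_pos hds hk) (lt_of_lt_of_le one_pos hA)]

end YoungFunction

section MainEst
open ENNReal

lemma nontrivial_Rn {n : ℕ} (hn : 0 < n) : Nontrivial (Rn n) := by
  haveI : Nonempty (Fin n) := ⟨⟨0, hn⟩⟩
  infer_instance

set_option maxHeartbeats 1000000 in
lemma main_est (n : ℕ) (hn : 0 < n) (s : ℝ) (hs0 : 0 < s) (Y : YoungFunction)
    (u : Rn n → ℝ) (hu : Measurable u) (h : Rn n) (hh : 0 < ‖h‖)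
    {A k : ℝ} (hA1 : 1 ≤ A)
    (hA2 : (2:ℝ) ^ (n + 1) / (volume (Metric.ball (0 : Rn n) 1)).toReal ≤ A)
    (hk : 0 < k)
    (hint : ∫⁻ p, ENNReal.ofReal (Y.M (Ds n s u p / k)) ∂nuMeasure n ≤ 1) :
    ∫⁻ x, ENNReal.ofReal
        (Y.M ((u (x + h) - u x) / ((2:ℝ) ^ (s + 1) * A * ‖h‖ ^ s * k))) ≤ 1 := by
  haveI := nontrivial_Rn hn
  set r : ℝ := ‖h‖ with hrdef
  have hr : 0 < r := hh
  set ω : ENNReal := volume (Metric.ball (0 : Rn n) 1) with hωdef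
  have hω0 : ω ≠ 0 := (Metric.measure_ball_pos volume 0 one_pos).ne'
  have hωtop : ω ≠ ⊤ := measure_ball_lt_top.ne
  have hωT : 0 < ω.toReal := ENNReal.toReal_pos hω0 hωtop
  have hA0 : 0 < A := lt_of_lt_of_le one_pos hA1
  set k' : ℝ := (2:ℝ) ^ (s + 1) * A * r ^ s * k with hk'def
  have h2s : (0:ℝ) < (2:ℝ) ^ (s+1) := Real.rpow_pos_of_pos two_pos _
  have hrs : (0:ℝ) < r ^ s := Real.rpow_pos_of_pos hr s
  have hk' : 0 < k' := by positivity
  -- measurability setup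
  have hnorm : Measurable fun p : Rn n × Rn n => ‖p.1 - p.2‖ :=
    (measurable_fst.sub measurable_snd).norm
  have hrp : Measurable fun p : Rn n × Rn n => ‖p.1 - p.2‖ ^ s :=
    (Real.continuous_rpow_const hs0.le).measurable.comp hnorm
  have hDs : Measurable (Ds n s u) :=
    ((hu.comp measurable_fst).sub (hu.comp measurable_snd)).div hrp
  set F : Rn n × Rn n → ℝ≥0∞ := fun p => ENNReal.ofReal (Y.M (Ds n s u p / k)) with hFdef
  have hF : Measurable F :=
    ENNReal.measurable_ofReal.comp (Y.M_measurable.comp (hDs.div_const k))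
  set w : Rn n × Rn n → ℝ≥0∞ :=
    (fun p => ENNReal.ofReal (‖p.1 - p.2‖ ^ (-(n : ℝ)))) with hwdef
  have hw : Measurable w := by
    have hwe : w = fun p => ENNReal.ofReal ((‖p.1 - p.2‖ ^ n)⁻¹) := by
      funext p
      rw [hwdef]
      show ENNReal.ofReal (‖p.1 - p.2‖ ^ (-(n:ℝ))) = _
      rw [Real.rpow_neg (norm_nonneg _), Real.rpow_natCast]
    rw [hwe]
    exact ENNReal.measurable_ofReal.comp (hnorm.pow_const n).inv
  have hwF : Measurable fun p : Rn n × Rn n => w p * F p := hw.mul hF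
  set G : Rn n → ℝ≥0∞ := fun x => ∫⁻ y, w (x, y) * F (x, y) with hGdef
  have hG : Measurable G := by
    apply Measurable.lintegral_prod_right (f := fun x y => w (x, y) * F (x, y))
    exact hwF
  have hGint : ∫⁻ x, G x = ∫⁻ p, F p ∂nuMeasure n := by
    rw [nuMeasure, lintegral_withDensity_eq_lintegral_mul _ (by exact hw) hF]
    simp only [Pi.mul_apply]
    rw [Measure.volume_eq_prod, lintegral_prod _ hwF.aemeasurable]
  -- inner estimate
  have est : ∀ x z : Rn n, (∀ y ∈ Metric.ball x r, ‖z - y‖ ≤ 2 * r) →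
      ∫⁻ y in Metric.ball x r, F (z, y) ≤ ENNReal.ofReal ((2*r)^n) * G z := by
    intro x z hz
    have hmz : Measurable fun y => w (z, y) * F (z, y) := hwF.comp measurable_prodMk_left
    calc ∫⁻ y in Metric.ball x r, F (z, y)
        ≤ ∫⁻ y in Metric.ball x r, ENNReal.ofReal ((2*r)^n) * (w (z, y) * F (z, y)) := by
          refine setLIntegral_mono (measurable_const.mul hmz) ?_
          intro y hy
          by_cases hzy : z = y
          · have hF0 : F (z, y) = 0 := by
              simp [hFdef, Ds, hzy, Y.M_zero]
            simp [hF0]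
          · have hd : 0 < ‖z - y‖ := by rwa [norm_sub_pos_iff]
            have hd2 : ‖z - y‖ ≤ 2 * r := hz y hy
            have h1 : (1:ℝ≥0∞) ≤ ENNReal.ofReal ((2*r)^n) * w (z, y) := by
              have hwzy : w (z,y) = ENNReal.ofReal ((‖z - y‖ ^ n)⁻¹) := by
                rw [hwdef]
                show ENNReal.ofReal (‖(z,y).1 - (z,y).2‖ ^ (-(n:ℝ))) = _
                rw [Real.rpow_neg (norm_nonneg _), Real.rpow_natCast]
              rw [hwzy, ← ENNReal.ofReal_mul (by positivity), ← ENNReal.ofReal_one]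
              apply ENNReal.ofReal_le_ofReal
              rw [← div_eq_mul_inv, le_div_iff₀ (by positivity)]
              calc (1:ℝ) * ‖z-y‖^n = ‖z-y‖^n := one_mul _
                _ ≤ (2*r)^n := pow_le_pow_left₀ hd.le hd2 n
            calc F (z,y) = 1 * F (z,y) := (one_mul _).symm
              _ ≤ (ENNReal.ofReal ((2*r)^n) * w (z,y)) * F (z,y) := mul_le_mul_left h1 _
              _ = ENNReal.ofReal ((2*r)^n) * (w (z,y) * F (z,y)) := mul_assoc _ _ _
      _ ≤ ∫⁻ y, ENNReal.ofReal ((2*r)^n) * (w (z, y) * F (z, y)) := setLIntegral_le_lintegral _ _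
      _ = ENNReal.ofReal ((2*r)^n) * G z := lintegral_const_mul _ hmz
  -- distance bounds
  have hdist1 : ∀ x : Rn n, ∀ y ∈ Metric.ball x r, ‖(x + h) - y‖ ≤ 2 * r := by
    intro x y hy
    have hxy : ‖y - x‖ < r := by rwa [Metric.mem_ball, dist_eq_norm] at hy
    have e : x + h - y = (x - y) + h := by abel
    rw [e]
    calc ‖(x - y) + h‖ ≤ ‖x - y‖ + ‖h‖ := norm_add_le _ _
      _ ≤ r + r := by
          rw [norm_sub_rev]
          exact add_le_add hxy.le le_rfl
      _ = 2 * r := by ring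
  have hdist2 : ∀ x : Rn n, ∀ y ∈ Metric.ball x r, ‖x - y‖ ≤ 2 * r := by
    intro x y hy
    have hxy : ‖y - x‖ < r := by rwa [Metric.mem_ball, dist_eq_norm] at hy
    rw [norm_sub_rev]
    nlinarith
  -- scaling bound
  have hbnd : ∀ d : ℝ, 0 ≤ d → d ≤ 2 * r → 2 * A * k * d ^ s ≤ k' := by
    intro d hd hdr
    have h1 : d ^ s ≤ (2 * r) ^ s := Real.rpow_le_rpow hd hdr hs0.le
    have h2 : ((2 * r : ℝ)) ^ s = 2 ^ s * r ^ s := Real.mul_rpow (by norm_num) hr.le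
    have h3 : (2:ℝ) ^ (s + 1) = 2 ^ s * 2 := by
      rw [Real.rpow_add two_pos, Real.rpow_one]
    have h4 : (0:ℝ) < (2:ℝ) ^ s := Real.rpow_pos_of_pos two_pos s
    have h5 : 2 * A * k * d ^ s ≤ 2 * A * k * (2 ^ s * r ^ s) := by
      have := mul_le_mul_of_nonneg_left (h1.trans_eq h2) (by positivity : (0:ℝ) ≤ 2 * A * k)
      linarith
    have h6 : 2 * A * k * (2 ^ s * r ^ s) = k' := by
      rw [hk'def, h3]; ring
    linarith
  -- pointwise midpoint estimate
  have ptwise : ∀ x : Rn n, ∀ y ∈ Metric.ball x r,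
      ENNReal.ofReal (Y.M ((u (x + h) - u x) / k')) ≤
        ENNReal.ofReal ((2 * A)⁻¹) * (F (x + h, y) + F (x, y)) := by
    intro x y hy
    have hb1 : Y.M (2 * (u (x + h) - u y) / k') ≤
        Y.M ((u (x + h) - u y) / ‖(x + h) - y‖ ^ s / k) / A := by
      refine Y.key s hA1 hk hk' _ _ (norm_nonneg _) (fun hd => ?_)
        (hbnd _ (norm_nonneg _) (hdist1 x y hy))
      have hxy : x + h = y := by rwa [norm_sub_eq_zero_iff] at hd
      rw [hxy, sub_self]
    have hb2 : Y.M (2 * (u x - u y) / k') ≤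
        Y.M ((u x - u y) / ‖x - y‖ ^ s / k) / A := by
      refine Y.key s hA1 hk hk' _ _ (norm_nonneg _) (fun hd => ?_)
        (hbnd _ (norm_nonneg _) (hdist2 x y hy))
      have hxy : x = y := by rwa [norm_sub_eq_zero_iff] at hd
      rw [hxy, sub_self]
    have hq : Y.M (2 * (u y - u x) / k') = Y.M (2 * (u x - u y) / k') := by
      rw [← Y.M_neg (2 * (u x - u y) / k')]
      congr 1; ring
    have hmid := Y.M_midpoint (2 * (u (x + h) - u y) / k') (2 * (u y - u x) / k')
    have harg : (u (x + h) - u x) / k' =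
        (2 * (u (x + h) - u y) / k' + 2 * (u y - u x) / k') / 2 := by
      field_simp; ring
    have hreal : Y.M ((u (x + h) - u x) / k') ≤
        (2 * A)⁻¹ * (Y.M (Ds n s u (x + h, y) / k) + Y.M (Ds n s u (x, y) / k)) := by
      rw [harg]
      refine le_trans hmid ?_
      rw [hq]
      have e : Ds n s u (x + h, y) = (u (x + h) - u y) / ‖(x + h) - y‖ ^ s := rfl
      have e2 : Ds n s u (x, y) = (u x - u y) / ‖x - y‖ ^ s := rfl
      rw [e, e2]
      have hA0' : (0:ℝ) < 2 * A := by positivity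
      rw [inv_mul_eq_div, le_div_iff₀ hA0']
      have m1 := Y.M_nonneg ((u (x + h) - u y) / ‖(x + h) - y‖ ^ s / k)
      have m2 := Y.M_nonneg ((u x - u y) / ‖x - y‖ ^ s / k)
      rw [le_div_iff₀ hA0] at hb1 hb2
      nlinarith
    calc ENNReal.ofReal (Y.M ((u (x + h) - u x) / k'))
        ≤ ENNReal.ofReal ((2 * A)⁻¹ *
            (Y.M (Ds n s u (x + h, y) / k) + Y.M (Ds n s u (x, y) / k))) :=
          ENNReal.ofReal_le_ofReal hreal
      _ = ENNReal.ofReal ((2 * A)⁻¹) * (F (x + h, y) + F (x, y)) := by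
          rw [ENNReal.ofReal_mul (by positivity),
            ENNReal.ofReal_add (Y.M_nonneg _) (Y.M_nonneg _)]
  -- ball volume
  have hball : ∀ x : Rn n, volume (Metric.ball x r) = ENNReal.ofReal (r ^ n) * ω := by
    intro x
    rw [hωdef, Measure.addHaar_ball volume x hr.le, finrank_euclideanSpace_fin]
  set β : ℝ≥0∞ := ENNReal.ofReal (r ^ n) * ω with hβdef
  have hβ0 : β ≠ 0 := mul_ne_zero (ENNReal.ofReal_pos.2 (by positivity)).ne' hω0
  have hβtop : β ≠ ⊤ := ENNReal.mul_ne_top ENNReal.ofReal_ne_top hωtop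
  set c1 : ℝ≥0∞ := ENNReal.ofReal ((2 * A)⁻¹) with hc1def
  set c2 : ℝ≥0∞ := ENNReal.ofReal ((2 * r) ^ n) with hc2def
  have step1 : ∀ x : Rn n, ENNReal.ofReal (Y.M ((u (x + h) - u x) / k')) ≤
      (β⁻¹ * c1 * c2) * (G (x + h) + G x) := by
    intro x
    have hmz1 : Measurable fun y => F (x + h, y) := hF.comp measurable_prodMk_left
    have hmz2 : Measurable fun y => F (x, y) := hF.comp measurable_prodMk_left
    have hball_ineq : β * ENNReal.ofReal (Y.M ((u (x + h) - u x) / k')) ≤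
        c1 * (c2 * (G (x + h) + G x)) := by
      have e : ∫⁻ _ in Metric.ball x r,
          ENNReal.ofReal (Y.M ((u (x + h) - u x) / k')) ∂volume =
          β * ENNReal.ofReal (Y.M ((u (x + h) - u x) / k')) := by
        rw [setLIntegral_const, hball x, mul_comm]
      rw [← e]
      calc ∫⁻ _ in Metric.ball x r,
          ENNReal.ofReal (Y.M ((u (x + h) - u x) / k')) ∂volume
          ≤ ∫⁻ y in Metric.ball x r, c1 * (F (x + h, y) + F (x, y)) ∂volume :=
            setLIntegral_mono (measurable_const.mul (hmz1.add hmz2))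
              (fun y hy => ptwise x y hy)
        _ = c1 * ((∫⁻ y in Metric.ball x r, F (x + h, y) ∂volume) +
              ∫⁻ y in Metric.ball x r, F (x, y) ∂volume) := by
            rw [lintegral_const_mul (f := fun y => F (x + h, y) + F (x, y)) _ (hmz1.add hmz2), lintegral_add_left hmz1]
        _ ≤ c1 * (c2 * G (x + h) + c2 * G x) := by
            gcongr
            · exact est x (x + h) (hdist1 x)
            · exact est x x (hdist2 x)
        _ = c1 * (c2 * (G (x + h) + G x)) := by rw [mul_add c2]
    calc ENNReal.ofReal (Y.M ((u (x + h) - u x) / k'))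
        = β⁻¹ * (β * ENNReal.ofReal (Y.M ((u (x + h) - u x) / k'))) := by
          rw [← mul_assoc, ENNReal.inv_mul_cancel hβ0 hβtop, one_mul]
      _ ≤ β⁻¹ * (c1 * (c2 * (G (x + h) + G x))) := mul_le_mul_right hball_ineq _
      _ = (β⁻¹ * c1 * c2) * (G (x + h) + G x) := by ring
  -- assemble
  have hGsum : Measurable fun x => G (x + h) + G x :=
    (hG.comp (measurable_add_const h)).add hG
  have hnum : (β⁻¹ * c1 * c2) * (1 + 1) ≤ 1 := by
    have key2 : (2:ℝ) ^ n * 2 ≤ A * ω.toReal := by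
      have hp : (2:ℝ) ^ (n + 1) = 2 ^ n * 2 := pow_succ 2 n
      have hA2' : (2:ℝ) ^ (n + 1) ≤ A * ω.toReal := by
        rw [div_le_iff₀ hωT] at hA2; linarith
      linarith
    have hXr : ((2 * A)⁻¹ : ℝ) * ((2 * r) ^ n) * 2 ≤ r ^ n * ω.toReal := by
      have h2n : ((2 * r : ℝ)) ^ n = 2 ^ n * r ^ n := mul_pow 2 r n
      have e : ((2 * A)⁻¹ : ℝ) * (2 ^ n * r ^ n) * 2 = r ^ n * (2 ^ n / A) := by
        field_simp
      rw [h2n, e]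
      have h7 : (2:ℝ) ^ n / A ≤ ω.toReal := by
        rw [div_le_iff₀ hA0]
        nlinarith [pow_pos (by norm_num : (0:ℝ) < 2) n]
      exact mul_le_mul_of_nonneg_left h7 (by positivity)
    have hX : c1 * c2 * 2 ≤ β := by
      have e1 : c1 * c2 * 2 = ENNReal.ofReal ((2 * A)⁻¹ * ((2 * r) ^ n) * 2) := by
        rw [ENNReal.ofReal_mul (by positivity), ENNReal.ofReal_mul (by positivity),
          ENNReal.ofReal_ofNat]
      rw [e1, hβdef]
      calc ENNReal.ofReal ((2 * A)⁻¹ * ((2 * r) ^ n) * 2)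
          ≤ ENNReal.ofReal (r ^ n * ω.toReal) := ENNReal.ofReal_le_ofReal hXr
        _ = ENNReal.ofReal (r ^ n) * ω := by
            rw [ENNReal.ofReal_mul (by positivity), ENNReal.ofReal_toReal hωtop]
    have e2 : (β⁻¹ * c1 * c2) * (1 + 1) = β⁻¹ * (c1 * c2 * 2) := by ring
    rw [e2]
    calc β⁻¹ * (c1 * c2 * 2) ≤ β⁻¹ * β := mul_le_mul_right hX _
      _ = 1 := ENNReal.inv_mul_cancel hβ0 hβtop
  calc ∫⁻ x, ENNReal.ofReal (Y.M ((u (x + h) - u x) / k'))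
      ≤ ∫⁻ x, (β⁻¹ * c1 * c2) * (G (x + h) + G x) := lintegral_mono step1
    _ = (β⁻¹ * c1 * c2) * ∫⁻ x, (G (x + h) + G x) := lintegral_const_mul _ hGsum
    _ = (β⁻¹ * c1 * c2) * ((∫⁻ x, G (x + h)) + ∫⁻ x, G x) := by
        rw [lintegral_add_left (f := fun x => G (x + h))
          (by exact hG.comp (measurable_add_const h))]
    _ = (β⁻¹ * c1 * c2) * ((∫⁻ x, G x) + ∫⁻ x, G x) := by
        rw [lintegral_add_right_eq_self G h]
    _ ≤ (β⁻¹ * c1 * c2) * (1 + 1) := by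
        gcongr <;> (rw [hGint]; exact hint)
    _ ≤ 1 := hnum

end MainEst

/-- Luxemburg norm. -/
def luxNorm {α : Type*} [MeasurableSpace α] (μ : Measure α) (M : ℝ → ℝ) (f : α → ℝ) : ℝ :=
  sInf {k : ℝ | 0 < k ∧ ∫⁻ a, ENNReal.ofReal (M (f a / k)) ∂μ ≤ 1}

/-- the norm form of the translation estimate (Corollary B.2):
there is `C = C(n,s) > 0`, namely `C = 2^{s+1}·max{1, 2^{n+1}/ω_n}`, such that
`‖u(·+h) − u‖_{M,dx} ≤ C|h|^s ‖D^s u‖_{M,ν_n}` for `0 < |h| < 1/2`. -/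
theorem norm_translation_estimate (n : ℕ) (hn : 0 < n) (s : ℝ)
    (hs : s ∈ Set.Ioo (0 : ℝ) 1) (Y : YoungFunction) :
    ∃ C : ℝ, 0 < C ∧
      C = (2 : ℝ) ^ (s + 1) *
        max 1 ((2 : ℝ) ^ (n + 1) / (volume (Metric.ball (0 : Rn n) 1)).toReal) ∧
      ∀ u : Rn n → ℝ, Measurable u →
        (∃ k : ℝ, 0 < k ∧
          ∫⁻ p, ENNReal.ofReal (Y.M (Ds n s u p / k)) ∂nuMeasure n ≤ 1) →
        ∀ h : Rn n, 0 < ‖h‖ → ‖h‖ < 1 / 2 →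
          luxNorm volume Y.M (fun x => u (x + h) - u x) ≤
            C * ‖h‖ ^ s * luxNorm (nuMeasure n) Y.M (Ds n s u) := by
  obtain ⟨hs0, hs1⟩ := hs
  set ω : ENNReal := volume (Metric.ball (0 : Rn n) 1) with hω
  set A : ℝ := max 1 ((2:ℝ) ^ (n + 1) / ω.toReal) with hA
  have hA1 : 1 ≤ A := le_max_left _ _
  have hA2 : (2:ℝ) ^ (n + 1) / ω.toReal ≤ A := le_max_right _ _
  have h2s : (0:ℝ) < (2:ℝ) ^ (s + 1) := Real.rpow_pos_of_pos two_pos _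
  have hApos : 0 < A := lt_of_lt_of_le one_pos hA1
  refine ⟨(2:ℝ) ^ (s + 1) * A, by positivity, rfl, ?_⟩
  rintro u hu ⟨k₀, hk₀, hk₀I⟩ h hh hh2
  set C : ℝ := (2:ℝ) ^ (s + 1) * A with hC
  have hrs : 0 < ‖h‖ ^ s := Real.rpow_pos_of_pos hh s
  have hCr : 0 < C * ‖h‖ ^ s := by positivity
  set L : ℝ := luxNorm volume Y.M (fun x => u (x + h) - u x) with hL
  have hmem : ∀ k : ℝ, 0 < k →
      (∫⁻ p, ENNReal.ofReal (Y.M (Ds n s u p / k)) ∂nuMeasure n ≤ 1) →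
      L ≤ C * ‖h‖ ^ s * k := by
    intro k hk hkI
    apply csInf_le ⟨0, fun t ht => ht.1.le⟩
    constructor
    · positivity
    · have hme := main_est n hn s hs0 Y u hu h hh hA1 hA2 hk hkI
      have e : C * ‖h‖ ^ s * k = (2:ℝ) ^ (s + 1) * A * ‖h‖ ^ s * k := by
        rw [hC]
      simpa [e] using hme
  have hSne : {k : ℝ | 0 < k ∧
      ∫⁻ p, ENNReal.ofReal (Y.M (Ds n s u p / k)) ∂nuMeasure n ≤ 1}.Nonempty :=
    ⟨k₀, hk₀, hk₀I⟩
  have h5 : L / (C * ‖h‖ ^ s) ≤ luxNorm (nuMeasure n) Y.M (Ds n s u) := by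
    apply le_csInf hSne
    intro k hk
    rw [div_le_iff₀ hCr]
    calc L ≤ C * ‖h‖ ^ s * k := hmem k hk.1 hk.2
      _ = k * (C * ‖h‖ ^ s) := by ring
  calc L = L / (C * ‖h‖ ^ s) * (C * ‖h‖ ^ s) := by rw [div_mul_cancel₀ L hCr.ne']
    _ ≤ luxNorm (nuMeasure n) Y.M (Ds n s u) * (C * ‖h‖ ^ s) :=
        mul_le_mul_of_nonneg_right h5 hCr.le
    _ = C * ‖h‖ ^ s * luxNorm (nuMeasure n) Y.M (Ds n s u) := by ring
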